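/- For every X ∈ M₂(ℂ): the trace of X·X̄ is a real number, det(X·X̄) = |det X|² ≥ 0, and tr(X·X̄) + 2·|det X| ≥ 0. Consequently the two eigenvalues of X·X̄ are either complex conjugates of one another or are both real with non-negative product. -/

import Mathlib

open scoped ComplexOrder

noncomputable section

/-- The underlying real vector space of the Lie algebra `g` (coordinates w.r.t. `E₁,…,E₆`). -/
abbrev GV : Type := Fin 6 → ℝ

/-- The basis vectors `E₁,…,E₆` (indexed by `0,…,5`). -/
def E (i : Fin 6) : GV := Pi.single i 1

/-- The Lie bracket of `g`: the only nonzero brackets of basis vectors are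
`[E₁,E₃] = -E₅`, `[E₂,E₄] = E₅`, `[E₁,E₄] = -E₆`, `[E₂,E₃] = -E₆`. -/
def br (X Y : GV) : GV :=
  ![0, 0, 0, 0,
    -(X 0 * Y 2 - X 2 * Y 0) + (X 1 * Y 3 - X 3 * Y 1),
    -(X 0 * Y 3 - X 3 * Y 0) - (X 1 * Y 2 - X 2 * Y 1)]

/-- `J` is a complex structure: `J ∘ J = -id`. -/
def IsCpxStr (J : Module.End ℝ GV) : Prop := ∀ x, J (J x) = -x

/-- Integrability (Newlander–Nirenberg) condition. -/
def Integrable (J : Module.End ℝ GV) : Prop :=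
  ∀ X Y, br (J X) (J Y) = br X Y + J (br (J X) Y) + J (br X (J Y))

/-- `J` induces the standard orientation of `g`. -/
def PosOrient (J : Module.End ℝ GV) : Prop :=
  ∃ v₁ v₂ v₃ : GV,
    0 < (Matrix.of fun i j => ![v₁, J v₁, v₂, J v₂, v₃, J v₃] i j).det

/-- `C⁺(g)`: integrable complex structures inducing the standard orientation. -/
def Cplus : Set (Module.End ℝ GV) := {J | IsCpxStr J ∧ Integrable J ∧ PosOrient J}

/-- The inner product making `E₁,…,E₆` orthonormal. -/
def inner6 (x y : GV) : ℝ := ∑ i, x i * y i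

def IsOrthog (J : Module.End ℝ GV) : Prop := ∀ x y, inner6 (J x) (J y) = inner6 x y

/-- `C⁺(g,g)`: orthogonal members of `C⁺(g)`. -/
def Cgg : Set (Module.End ℝ GV) := {J | J ∈ Cplus ∧ IsOrthog J}

lemma le46 : (4:ℕ) ≤ 6 := by norm_num

/-- Determinant of `(w̄₁, Ĵw̄₁, w̄₂, Ĵw̄₂)` w.r.t. the basis `(Ē₁,…,Ē₄)` of `g/[g,g]`
(the coordinates of the class of `v` are the first four coordinates of `v`). -/
def hatDet (J : Module.End ℝ GV) (w₁ w₂ : GV) : ℝ :=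
  (Matrix.of fun (i : Fin 4) (j : Fin 4) =>
    ![w₁, J w₁, w₂, J w₂] i (Fin.castLE le46 j)).det

/-- `C₊`: members of `C⁺(g)` whose induced structure on `g/[g,g]` is positively oriented. -/
def CplusP : Set (Module.End ℝ GV) :=
  {J | J ∈ Cplus ∧ ∃ w₁ w₂ : GV, 0 < hatDet J w₁ w₂}

/-- `C₋`: members of `C⁺(g)` whose induced structure on `g/[g,g]` is negatively oriented. -/
def CplusM : Set (Module.End ℝ GV) :=
  {J | J ∈ Cplus ∧ ∃ w₁ w₂ : GV, hatDet J w₁ w₂ < 0}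

/-- `ℂ ⊗ g*`, identified with coordinate vectors with respect to the dual basis `e¹,…,e⁶`. -/
abbrev MC : Type := Fin 6 → ℂ

/-- Evaluation of a complexified 1-form on a vector of `g`. -/
def ev (α : MC) (v : GV) : ℂ := ∑ i, α i * v i

/-- The dual basis `e¹,…,e⁶` inside `ℂ ⊗ g*`. -/
def eC (i : Fin 6) : MC := Pi.single i 1

def w1 : MC := eC 0 + Complex.I • eC 1
def w2 : MC := eC 2 + Complex.I • eC 3
def w3 : MC := eC 4 + Complex.I • eC 5
/-- `ω̄¹` -/
def w1b : MC := eC 0 - Complex.I • eC 1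
/-- `ω̄²` -/
def w2b : MC := eC 2 - Complex.I • eC 3
/-- `ω̄³` -/
def w3b : MC := eC 4 - Complex.I • eC 5

/-- The space of `(1,0)`-forms of `J`, a complex subspace of `ℂ ⊗ g*`. -/
def holSub (J : Module.End ℝ GV) : Submodule ℂ MC where
  carrier := {α | ∀ v : GV, ev α (J v) = Complex.I * ev α v}
  add_mem' := by
    intro a b ha hb v
    simp only [ev, Pi.add_apply, add_mul, Finset.sum_add_distrib] at *
    rw [ha v, hb v]; ring
  zero_mem' := by intro v; simp [ev]
  smul_mem' := by
    intro c α hα v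
    simp only [ev, Pi.smul_apply, smul_eq_mul, mul_assoc, ← Finset.mul_sum] at *
    rw [hα v]; ring
/-- `(α₁, α₂, α₃)` is a basis of the space of `(1,0)`-forms of `J`. -/
def IsHolBasis (J : Module.End ℝ GV) (α₁ α₂ α₃ : MC) : Prop :=
  LinearIndependent ℂ ![α₁, α₂, α₃] ∧ Submodule.span ℂ {α₁, α₂, α₃} = holSub J

/-- Inclusion into the exterior algebra of `ℂ ⊗ g*`; wedge products are multiplications there. -/
def ι : MC →ₗ[ℂ] ExteriorAlgebra ℂ MC := ExteriorAlgebra.ι ℂ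

/-- The standard bi-invariant complex structure `J₀`. -/
def J0 : Module.End ℝ GV :=
  Matrix.mulVecLin !![0,-1,0,0,0,0; 1,0,0,0,0,0; 0,0,0,-1,0,0;
                      0,0,1,0,0,0; 0,0,0,0,0,-1; 0,0,0,0,1,0]

/-- The vector space underlying `V = span(E₁,E₂,E₃,E₄)`. -/
abbrev W4 : Type := Fin 4 → ℝ

/-- Inclusion `V = span(E₁,…,E₄) ↪ g`. -/
def incl (w : W4) : GV := fun i => if h : (i : ℕ) < 4 then w ⟨i, h⟩ else 0

def det4W (v : Fin 4 → W4) : ℝ := (Matrix.of fun i j => v i j).det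

/-- The topology on the space of `ℝ`-linear endomorphisms of `g`
(as a subspace of the space of all maps `g → g`). -/
instance : TopologicalSpace (Module.End ℝ GV) :=
  TopologicalSpace.induced (fun f => (f : GV → GV)) inferInstance

/-- The span of `E₁,E₂,E₃,E₄`. -/
def V4span : Submodule ℝ GV := Submodule.span ℝ {E 0, E 1, E 2, E 3}

/-- trace of `X·X̄` is real, `det(X·X̄) = |det X|² ≥ 0`,
`tr(X·X̄) + 2|det X| ≥ 0`; hence the eigenvalues of `X·X̄` are either complex
conjugates or both real with non-negative product. -/
theorem stmt4 (X : Matrix (Fin 2) (Fin 2) ℂ) :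
    ((X * X.map (starRingEnd ℂ)).trace).im = 0 ∧
    (X * X.map (starRingEnd ℂ)).det = ((‖X.det‖ : ℝ) : ℂ) ^ 2 ∧
    0 ≤ (X * X.map (starRingEnd ℂ)).det ∧
    0 ≤ ((X * X.map (starRingEnd ℂ)).trace).re + 2 * ‖X.det‖ ∧
    (∀ l m : ℂ, (X * X.map (starRingEnd ℂ)).charpoly =
        (Polynomial.X - Polynomial.C l) * (Polynomial.X - Polynomial.C m) →
      m = (starRingEnd ℂ) l ∨ (l.im = 0 ∧ m.im = 0 ∧ 0 ≤ l.re * m.re)) := by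
  have hdet : (X * X.map (starRingEnd ℂ)).det = ((‖X.det‖ : ℝ) : ℂ) ^ 2 := by
    rw [Matrix.det_mul, ← RingHom.mapMatrix_apply, ← RingHom.map_det, Complex.mul_conj,
      ← Complex.sq_norm]
    push_cast
    ring
  have htr : ((X * X.map (starRingEnd ℂ)).trace).im = 0 := by
    simp [Matrix.trace_fin_two, Matrix.mul_apply, Fin.sum_univ_two, Matrix.map_apply,
      Complex.add_im, Complex.mul_im, Complex.conj_re, Complex.conj_im]
    ring
  have hdnn : (0:ℂ) ≤ (X * X.map (starRingEnd ℂ)).det := by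
    rw [hdet]
    norm_cast
    positivity
  refine ⟨htr, hdet, hdnn, ?_, ?_⟩
  · have htrre : ((X * X.map (starRingEnd ℂ)).trace).re =
        Complex.normSq (X 0 0) + Complex.normSq (X 1 1) +
          2 * ((X 0 1).re * (X 1 0).re + (X 0 1).im * (X 1 0).im) := by
      simp [Matrix.trace_fin_two, Matrix.mul_apply, Fin.sum_univ_two, Matrix.map_apply,
        Complex.add_re, Complex.mul_re, Complex.conj_re, Complex.conj_im, Complex.normSq_apply]
      ring
    have habs : ‖X 0 1 * X 1 0‖ - ‖X 0 0 * X 1 1‖ ≤ ‖X.det‖ := by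
      rw [Matrix.det_fin_two]
      have h := norm_add_le (X 0 1 * X 1 0 - X 0 0 * X 1 1) (X 0 0 * X 1 1)
      simp only [sub_add_cancel] at h
      have : ‖X 0 1 * X 1 0 - X 0 0 * X 1 1‖
          = ‖X 0 0 * X 1 1 - X 0 1 * X 1 0‖ := by
        rw [← norm_neg]; ring_nf
      linarith
    rw [htrre]
    set a := X 0 0; set b := X 0 1; set c := X 1 0; set d := X 1 1
    have h1 : ‖a‖ * ‖d‖ = ‖a*d‖ := (norm_mul _ _).symm
    have h2 : (‖b*c‖)^2 = (b.re * c.re + b.im * c.im)^2 + (b.re*c.im - b.im*c.re)^2 := by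
      rw [Complex.sq_norm, Complex.normSq_mul, Complex.normSq_apply, Complex.normSq_apply]
      ring
    have h3 : ‖a‖ ^ 2 = Complex.normSq a := Complex.sq_norm a
    have h4 : ‖d‖ ^ 2 = Complex.normSq d := Complex.sq_norm d
    have h5 : 0 ≤ ‖b*c‖ + (b.re * c.re + b.im * c.im) := by
      nlinarith [norm_nonneg (b*c), h2, sq_nonneg (b.re*c.im - b.im*c.re),
        sq_nonneg (‖b*c‖ + (b.re * c.re + b.im * c.im))]
    nlinarith [sq_nonneg (‖a‖ - ‖d‖), habs, h1, h3, h4, h5]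
  · intro l m h
    have hcard : Fintype.card (Fin 2) = 2 := by simp
    have hT := Matrix.trace_eq_neg_charpoly_coeff (X * X.map (starRingEnd ℂ))
    have hD := Matrix.det_eq_sign_charpoly_coeff (X * X.map (starRingEnd ℂ))
    have hexp : (Polynomial.X - Polynomial.C l) * (Polynomial.X - Polynomial.C m)
        = Polynomial.X^2 - Polynomial.C (l+m) * Polynomial.X + Polynomial.C (l*m) := by
      rw [Polynomial.C_add, Polynomial.C_mul]; ring
    rw [h, hexp, hcard] at hT hD
    have hsum : (X * X.map (starRingEnd ℂ)).trace = l + m := by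
      rw [hT]
      simp [Polynomial.coeff_add, Polynomial.coeff_sub, Polynomial.coeff_X_pow,
        Polynomial.coeff_C_mul, Polynomial.coeff_X_one, Polynomial.coeff_C]
    have hprod : (X * X.map (starRingEnd ℂ)).det = l * m := by
      rw [hD]
      simp [Polynomial.coeff_add, Polynomial.coeff_sub, Polynomial.coeff_X_pow,
        Polynomial.coeff_C_mul, Polynomial.mul_coeff_zero, Polynomial.coeff_C]
    have hsim : (l + m).im = 0 := by rw [← hsum]; exact htr
    have hpim : (l * m).im = 0 := by
      rw [← hprod, hdet]
      simp [← Complex.ofReal_pow]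
    have hpre : 0 ≤ (l * m).re := by
      rw [← hprod, hdet, ← Complex.ofReal_pow, Complex.ofReal_re]
      positivity
    rw [Complex.add_im] at hsim
    rw [Complex.mul_im] at hpim
    by_cases hl : l.im = 0
    · right
      have hm : m.im = 0 := by linarith
      refine ⟨hl, hm, ?_⟩
      rw [Complex.mul_re, hl, hm] at hpre
      simpa using hpre
    · left
      have hm : m.im = -l.im := by linarith
      have hz : l.im * (m.re - l.re) = 0 := by rw [hm] at hpim; nlinarith
      rcases mul_eq_zero.mp hz with h' | h'
      · exact absurd h' hl
      · have hre : m.re = l.re := by linarith [sub_eq_zero.mp h']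
        apply Complex.ext <;> simp [Complex.conj_re, Complex.conj_im, hre, hm]

end
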